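/- For all integers 2 ≤ m ≤ n, if the complete graph K_m admits a connected and complete k-edge-coloring, then K_n admits a connected and complete k-edge-coloring; that is, ψ'_c(K_m) ≤ ψ'_c(K_n). -/

import Mathlib

open SimpleGraph

/-- The subgraph of `G` formed by the edges of color `i`. -/
def colorClassSubgraph {V : Type*} {k : ℕ} (G : SimpleGraph V) (c : Sym2 V → Fin k)
    (i : Fin k) : G.Subgraph where
  verts := {v | ∃ w, G.Adj v w ∧ c s(v, w) = i}
  Adj v w := G.Adj v w ∧ c s(v, w) = i
  adj_sub h := h.1
  edge_vert h := ⟨_, h⟩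
  symm := ⟨fun v w h => ⟨h.1.symm, by rw [Sym2.eq_swap]; exact h.2⟩⟩

/-- `c` is a complete edge-coloring of `G` with `k` colors: every color is used on some
edge, and every two distinct colors appear on a pair of edges sharing a vertex. -/
def IsCompleteEdgeColoring {V : Type*} {k : ℕ} (G : SimpleGraph V)
    (c : Sym2 V → Fin k) : Prop :=
  (∀ i : Fin k, ∃ e ∈ G.edgeSet, c e = i) ∧
  ∀ i j : Fin k, i ≠ j →
    ∃ u v w : V, G.Adj u v ∧ G.Adj u w ∧ c s(u, v) = i ∧ c s(u, w) = j

/-- `c` is a connected edge-coloring: each color class induces a connected subgraph. -/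
def IsConnectedEdgeColoring {V : Type*} {k : ℕ} (G : SimpleGraph V)
    (c : Sym2 V → Fin k) : Prop :=
  ∀ i : Fin k, (colorClassSubgraph G c i).Connected


/-- The connected-pseudoachromatic index of the complete graph `K_n`. -/
noncomputable def connectedPseudoachromaticIndex (n : ℕ) : ℕ :=
  sSup {k : ℕ | ∃ c : Sym2 (Fin n) → Fin k,
    IsCompleteEdgeColoring (⊤ : SimpleGraph (Fin n)) c ∧
      IsConnectedEdgeColoring (⊤ : SimpleGraph (Fin n)) c}

lemma aux_extend {m n : ℕ} (hm : 2 ≤ m) (hmn : m ≤ n) (k : ℕ)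
    (c : Sym2 (Fin m) → Fin k)
    (hcomp : IsCompleteEdgeColoring (⊤ : SimpleGraph (Fin m)) c)
    (hconn : IsConnectedEdgeColoring (⊤ : SimpleGraph (Fin m)) c) :
    ∃ c' : Sym2 (Fin n) → Fin k,
      IsCompleteEdgeColoring (⊤ : SimpleGraph (Fin n)) c' ∧
        IsConnectedEdgeColoring (⊤ : SimpleGraph (Fin n)) c' := by
  classical
  set v0 : Fin m := ⟨0, by omega⟩ with hv0
  set v1 : Fin m := ⟨1, by omega⟩ with hv1
  set p : Fin n → Fin m := fun x => if h : (x : ℕ) < m then ⟨x, h⟩ else v0 with hp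
  set ι : Fin m → Fin n := Fin.castLE hmn with hι
  have hpι : ∀ x : Fin m, p (ι x) = x := by
    intro x
    simp only [hp, hι]
    rw [dif_pos (by exact x.isLt)]
    exact Fin.ext rfl
  have hιinj : Function.Injective ι := Fin.castLE_injective hmn
  -- the extended coloring
  set c' : Sym2 (Fin n) → Fin k :=
    fun e => if (e.map p).IsDiag then c s(v0, v1) else c (e.map p) with hc'def
  have hc'ne : ∀ u v : Fin n, p u ≠ p v → c' s(u, v) = c s(p u, p v) := by
    intro u v h
    simp only [hc'def, Sym2.map_pair_eq]
    rw [if_neg (by rwa [Sym2.mk_isDiag_iff])]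
  have hc'eq : ∀ u v : Fin n, p u = p v → c' s(u, v) = c s(v0, v1) := by
    intro u v h
    simp only [hc'def, Sym2.map_pair_eq]
    rw [if_pos (by rwa [Sym2.mk_isDiag_iff])]
  have hc'ι : ∀ x y : Fin m, x ≠ y → c' s(ι x, ι y) = c s(x, y) := by
    intro x y h
    rw [hc'ne, hpι, hpι]
    rw [hpι, hpι]; exact h
  -- vertices ≥ m map to v0
  have hpbig : ∀ v : Fin n, ¬ (v : ℕ) < m → p v = v0 := by
    intro v h; simp only [hp]; rw [dif_neg h]
  have hpsmall : ∀ v : Fin n, (h : (v : ℕ) < m) → p v = ⟨v, h⟩ := by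
    intro v h; simp only [hp]; rw [dif_pos h]
  have hιp : ∀ v : Fin n, (v : ℕ) < m → ι (p v) = v := by
    intro v h
    rw [hpsmall v h]
    exact Fin.ext rfl
  refine ⟨c', ?_, ?_⟩
  · constructor
    · intro i
      obtain ⟨e, he, hce⟩ := hcomp.1 i
      induction e with
      | h x y =>
        have hxy : x ≠ y := by simpa using he
        refine ⟨s(ι x, ι y), ?_, ?_⟩
        · simpa using fun h => hxy (hιinj h)
        · rw [hc'ι x y hxy]; exact hce
    · intro i j hij
      obtain ⟨u, v, w, huv, huw, hcv, hcw⟩ := hcomp.2 i j hij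
      refine ⟨ι u, ι v, ι w, ?_, ?_, ?_, ?_⟩
      · simpa using fun h => huv.ne (hιinj h)
      · simpa using fun h => huw.ne (hιinj h)
      · rw [hc'ι u v huv.ne]; exact hcv
      · rw [hc'ι u w huw.ne]; exact hcw
  · intro i
    set S : (⊤ : SimpleGraph (Fin m)).Subgraph := colorClassSubgraph ⊤ c i with hS
    set S' : (⊤ : SimpleGraph (Fin n)).Subgraph := colorClassSubgraph ⊤ c' i with hS'
    have hSconn := hconn i
    -- vertex membership transfer
    have hvertι : ∀ x : Fin m, x ∈ S.verts → ι x ∈ S'.verts := by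
      rintro x ⟨w, hadj, hcol⟩
      exact ⟨ι w, by simpa using fun h => hadj.ne (hιinj h),
        by rw [hc'ι x w hadj.ne]; exact hcol⟩
    -- the graph hom from S.coe to S'.coe
    have hadjι : ∀ x y : Fin m, S.Adj x y → S'.Adj (ι x) (ι y) := by
      rintro x y ⟨hadj, hcol⟩
      exact ⟨by simpa using fun h => hadj.ne (hιinj h),
        by rw [hc'ι x y hadj.ne]; exact hcol⟩
    let φ : S.coe →g S'.coe :=
      { toFun := fun x => ⟨ι x.1, hvertι x.1 x.2⟩
        map_rel' := by
          rintro ⟨x, hx⟩ ⟨y, hy⟩ hxy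
          exact hadjι x y hxy }
    -- every vertex of S' reaches some ι x with x ∈ S.verts
    have key : ∀ v : Fin n, (hv : v ∈ S'.verts) →
        ∃ x : Fin m, ∃ hx : x ∈ S.verts,
          S'.coe.Reachable ⟨v, hv⟩ ⟨ι x, hvertι x hx⟩ := by
      rintro v hv
      obtain ⟨w, hadj, hcol⟩ := id hv
      have hvw : v ≠ w := by simpa using hadj
      by_cases hpvw : p v = p w
      · -- blob edge; i = c s(v0, v1)
        have hi : c s(v0, v1) = i := by rw [← hc'eq v w hpvw]; exact hcol
        have hx0 : v0 ∈ S.verts := by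
          refine ⟨v1, ?_, hi⟩
          simp only [top_adj]
          intro h
          have := congrArg Fin.val h
          simp [hv0, hv1] at this
        refine ⟨v0, hx0, ?_⟩
        by_cases hvv0 : v = ι v0
        · have h' : (⟨v, hv⟩ : S'.verts) = ⟨ι v0, hvertι v0 hx0⟩ := Subtype.ext hvv0
          rw [h']
        · refine Adj.reachable ?_
          rw [Subgraph.coe_adj]
          refine ⟨by simpa using hvv0, ?_⟩
          rw [hc'eq v (ι v0) ?_, hi]
          · rw [hpι]
            -- p v = v0 : since p v = p w and v ≠ w, one of them is ≥ m or v = 0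
            by_cases hvlt : (v : ℕ) < m
            · by_cases hwlt : (w : ℕ) < m
              · exfalso
                apply hvw
                have := congrArg Fin.val hpvw
                rw [hpsmall v hvlt, hpsmall w hwlt] at this
                exact Fin.ext this
              · rw [hpbig w hwlt] at hpvw
                exact hpvw
            · exact hpbig v hvlt
      · -- proper edge
        have hcolm : c s(p v, p w) = i := by rw [← hc'ne v w hpvw]; exact hcol
        by_cases hvlt : (v : ℕ) < m
        · have hx : p v ∈ S.verts := ⟨p w, by simpa using hpvw, hcolm⟩
          refine ⟨p v, hx, ?_⟩
          have h' : (⟨v, hv⟩ : S'.verts) = ⟨ι (p v), hvertι (p v) hx⟩ :=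
            Subtype.ext (hιp v hvlt).symm
          rw [h']
        · -- v ≥ m, so p v = v0 and w < m
          have hpv : p v = v0 := hpbig v hvlt
          have hwlt : (w : ℕ) < m := by
            by_contra hwlt
            exact hpvw (by rw [hpv, hpbig w hwlt])
          refine ⟨p w, ⟨p v, by simpa using (Ne.symm hpvw), by rw [Sym2.eq_swap]; exact hcolm⟩, ?_⟩
          refine Adj.reachable ?_
          rw [Subgraph.coe_adj]
          refine ⟨?_, ?_⟩
          · show (⊤ : SimpleGraph (Fin n)).Adj v (ι (p w))
            rw [hιp w hwlt]; simpa using hadj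
          · rw [hc'ne v (ι (p w)) (by rw [hpι]; exact hpvw), hpι]
            exact hcolm
    rw [Subgraph.connected_iff]
    constructor
    · constructor
      rintro ⟨v, hv⟩ ⟨w, hw⟩
      obtain ⟨x, hx, hrx⟩ := key v hv
      obtain ⟨y, hy, hry⟩ := key w hw
      refine hrx.trans (Reachable.trans ?_ hry.symm)
      have hr : S.coe.Reachable ⟨x, hx⟩ ⟨y, hy⟩ := hSconn ⟨x, hx⟩ ⟨y, hy⟩
      exact hr.map φ
    · obtain ⟨e, he, hce⟩ := hcomp.1 i
      induction e with
      | h x y =>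
        have hxy : x ≠ y := by simpa using he
        exact ⟨ι x, hvertι x ⟨y, by simpa using hxy, hce⟩⟩

theorem connectedPseudoachromaticIndex_monotone
    (m n : ℕ) (hm : 2 ≤ m) (hmn : m ≤ n) :
    (∀ (k : ℕ) (c : Sym2 (Fin m) → Fin k),
      IsCompleteEdgeColoring (⊤ : SimpleGraph (Fin m)) c ∧
        IsConnectedEdgeColoring (⊤ : SimpleGraph (Fin m)) c →
          ∃ c' : Sym2 (Fin n) → Fin k,
            IsCompleteEdgeColoring (⊤ : SimpleGraph (Fin n)) c' ∧
              IsConnectedEdgeColoring (⊤ : SimpleGraph (Fin n)) c') ∧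
      connectedPseudoachromaticIndex m ≤ connectedPseudoachromaticIndex n := by
  classical
  refine ⟨fun k c h => aux_extend hm hmn k c h.1 h.2, ?_⟩
  set Sm := {k : ℕ | ∃ c : Sym2 (Fin m) → Fin k,
    IsCompleteEdgeColoring (⊤ : SimpleGraph (Fin m)) c ∧
      IsConnectedEdgeColoring (⊤ : SimpleGraph (Fin m)) c} with hSm
  set Sn := {k : ℕ | ∃ c : Sym2 (Fin n) → Fin k,
    IsCompleteEdgeColoring (⊤ : SimpleGraph (Fin n)) c ∧
      IsConnectedEdgeColoring (⊤ : SimpleGraph (Fin n)) c} with hSn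
  have hsub : Sm ⊆ Sn := by
    rintro k ⟨c, hc1, hc2⟩
    obtain ⟨c', h1, h2⟩ := aux_extend hm hmn k c hc1 hc2
    exact ⟨c', h1, h2⟩
  have hbdd : BddAbove Sn := by
    refine ⟨Fintype.card (Sym2 (Fin n)), ?_⟩
    rintro k ⟨c, hc1, _⟩
    have : ∀ i : Fin k, ∃ e : Sym2 (Fin n), c e = i := by
      intro i
      obtain ⟨e, _, hce⟩ := hc1.1 i
      exact ⟨e, hce⟩
    choose f hf using this
    have hfinj : Function.Injective f := by
      intro i j hij
      rw [← hf i, ← hf j, hij]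
    simpa using Fintype.card_le_of_injective f hfinj
  rcases Set.eq_empty_or_nonempty Sm with hem | hne
  · unfold connectedPseudoachromaticIndex
    rw [← hSm, ← hSn, hem, csSup_empty]
    exact Nat.zero_le _
  · exact csSup_le_csSup hbdd hne hsub
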